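/- Completeness for ground queries, fixpoint form: let P be a ground program, a ∈ A an atom, and x ∈ Fin (n+1). If x ≤ f(a) for every model f of P (i.e., x is a correct answer for P and the ground query ?a), then there exists k ∈ ℕ such that x ≤ T_P^[k](⊥)(a), where ⊥ is the interpretation mapping every atom to v_0. -/

import Mathlib

namespace FLLP

def CL {n : ℕ} (x y : Fin (n+1)) : Fin (n+1) :=
  ⟨x.val + y.val - n, by have := x.isLt; have := y.isLt; omega⟩

def RL {n : ℕ} (j i : Fin (n+1)) : Fin (n+1) :=
  if h : i ≤ j then ⟨n, n.lt_succ_self⟩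
  else ⟨n + j.val - i.val, by
    have h' : j.val < i.val := Fin.lt_def.mp (lt_of_not_ge h)
    have := i.isLt; omega⟩

def RG {n : ℕ} (j i : Fin (n+1)) : Fin (n+1) :=
  if i ≤ j then ⟨n, n.lt_succ_self⟩ else j

inductive Body (A H : Type) : Type where
  | atom : A → Body A H
  | andG : Body A H → Body A H → Body A H
  | andL : Body A H → Body A H → Body A H
  | or   : Body A H → Body A H → Body A H
  | hedge : H → Body A H → Body A H
  deriving DecidableEq

def eval {n : ℕ} {A H : Type} (hinv : H → Fin (n+1) → Fin (n+1))
    (f : A → Fin (n+1)) : Body A H → Fin (n+1)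
  | .atom a => f a
  | .andG B₁ B₂ => min (eval hinv f B₁) (eval hinv f B₂)
  | .andL B₁ B₂ => CL (eval hinv f B₁) (eval hinv f B₂)
  | .or B₁ B₂ => max (eval hinv f B₁) (eval hinv f B₂)
  | .hedge h B => hinv h (eval hinv f B)

inductive Imp : Type where
  | luka : Imp
  | godel : Imp
  deriving DecidableEq

def tnorm {n : ℕ} : Imp → Fin (n+1) → Fin (n+1) → Fin (n+1)
  | .luka => CL
  | .godel => min

def implicator {n : ℕ} : Imp → Fin (n+1) → Fin (n+1) → Fin (n+1)
  | .luka => RL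
  | .godel => RG

structure Program (n : ℕ) (A H : Type) [DecidableEq A] [DecidableEq H] : Type where
  rules : Finset (A × Body A H × Fin (n+1) × Imp)
  facts : Finset (A × Fin (n+1))

noncomputable def TP {n : ℕ} {A H : Type} [DecidableEq A] [DecidableEq H]
    (P : Program n A H) (hinv : H → Fin (n+1) → Fin (n+1))
    (f : A → Fin (n+1)) : A → Fin (n+1) := fun a =>
  max ((P.rules.filter (fun R => R.1 = a)).sup
        (fun R => tnorm R.2.2.2 (eval hinv f R.2.1) R.2.2.1))
      ((P.facts.filter (fun F => F.1 = a)).sup (fun F => F.2))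

def isModel {n : ℕ} {A H : Type} [DecidableEq A] [DecidableEq H]
    (P : Program n A H) (hinv : H → Fin (n+1) → Fin (n+1))
    (f : A → Fin (n+1)) : Prop :=
  (∀ R ∈ P.rules, R.2.2.1 ≤ implicator R.2.2.2 (f R.1) (eval hinv f R.2.1)) ∧
  (∀ F ∈ P.facts, F.2 ≤ f F.1)


lemma CL_mono {n : ℕ} {b b' r : Fin (n+1)} (h : b ≤ b') : CL b r ≤ CL b' r := by
  simp only [CL, Fin.le_def] at *; omega

lemma tnorm_mono {n : ℕ} (i : Imp) {b b' : Fin (n+1)} (r : Fin (n+1)) (h : b ≤ b') :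
    tnorm i b r ≤ tnorm i b' r := by
  cases i with
  | luka => exact CL_mono h
  | godel => exact min_le_min h le_rfl

lemma eval_mono {n : ℕ} {A H : Type} (hinv : H → Fin (n+1) → Fin (n+1))
    (hmono : ∀ h, Monotone (hinv h)) {f g : A → Fin (n+1)} (hf : f ≤ g) :
    ∀ B : Body A H, eval hinv f B ≤ eval hinv g B := by
  intro B
  induction B with
  | atom a => exact hf a
  | andG B₁ B₂ ih₁ ih₂ => exact min_le_min ih₁ ih₂
  | andL B₁ B₂ ih₁ ih₂ =>
      calc CL (eval hinv f B₁) (eval hinv f B₂) ≤ CL (eval hinv g B₁) (eval hinv f B₂) :=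
            CL_mono ih₁
        _ ≤ CL (eval hinv g B₁) (eval hinv g B₂) := by
            simp only [CL, Fin.le_def] at *; omega
  | or B₁ B₂ ih₁ ih₂ => exact max_le_max ih₁ ih₂
  | hedge h B ih => exact hmono h ih

lemma TP_mono {n : ℕ} {A H : Type} [DecidableEq A] [DecidableEq H]
    (P : Program n A H) (hinv : H → Fin (n+1) → Fin (n+1))
    (hmono : ∀ h, Monotone (hinv h)) {f g : A → Fin (n+1)} (hf : f ≤ g) :
    TP P hinv f ≤ TP P hinv g := by
  intro a
  refine max_le_max (Finset.sup_mono_fun ?_) le_rfl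
  intro R _
  exact tnorm_mono _ _ (eval_mono hinv hmono hf _)

lemma adjunction {n : ℕ} (i : Imp) (b r y : Fin (n+1)) (h : tnorm i b r ≤ y) :
    r ≤ implicator i y b := by
  cases i with
  | luka =>
      simp only [tnorm, implicator, CL, RL, Fin.le_def] at *
      split
      · have := r.isLt; simp; omega
      · rename_i hby
        have hby' : y.val < b.val := by
          rcases Fin.lt_def.mp (lt_of_not_ge hby) with h'; exact h'
        have := r.isLt; simp; omega
  | godel =>
      simp only [tnorm, implicator, RG] at *
      split
      · exact Fin.le_def.mpr (by have := r.isLt; simp; omega)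
      · rename_i hby
        have hby' : y < b := lt_of_not_ge hby
        rcases le_total b r with hbr | hrb
        · rw [min_eq_left hbr] at h
          exact absurd h (not_le.mpr hby')
        · calc r = min b r := (min_eq_right hrb).symm
            _ ≤ y := h

lemma fixpoint_isModel {n : ℕ} {A H : Type} [DecidableEq A] [DecidableEq H]
    (P : Program n A H) (hinv : H → Fin (n+1) → Fin (n+1))
    {f : A → Fin (n+1)} (hf : TP P hinv f = f) : isModel P hinv f := by
  constructor
  · intro R hR
    have hm : R ∈ P.rules.filter (fun S => S.1 = R.1) := Finset.mem_filter.mpr ⟨hR, rfl⟩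
    have h1 : tnorm R.2.2.2 (eval hinv f R.2.1) R.2.2.1 ≤ TP P hinv f R.1 :=
      le_trans (Finset.le_sup (f := fun S => tnorm S.2.2.2 (eval hinv f S.2.1) S.2.2.1) hm)
        (le_max_left _ _)
    rw [hf] at h1
    exact adjunction _ _ _ _ h1
  · intro F hF
    have hm : F ∈ P.facts.filter (fun G => G.1 = F.1) := Finset.mem_filter.mpr ⟨hF, rfl⟩
    have h1 : F.2 ≤ TP P hinv f F.1 :=
      le_trans (Finset.le_sup (f := fun G => G.2) hm) (le_max_right _ _)
    rwa [hf] at h1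

theorem TP_complete_ground (n : ℕ) (hn : 1 ≤ n) (A H : Type) [Fintype A] [Fintype H]
    [DecidableEq A] [DecidableEq H]
    (hinv : H → Fin (n+1) → Fin (n+1)) (hmono : ∀ h, Monotone (hinv h))
    (P : Program n A H)
    (a : A) (x : Fin (n+1))
    (hx : ∀ f : A → Fin (n+1), isModel P hinv f → x ≤ f a) :
    ∃ k : ℕ, x ≤ (TP P hinv)^[k] (fun _ => 0) a := by
  set g : ℕ → (A → Fin (n+1)) := fun k => (TP P hinv)^[k] (fun _ => 0) with hg
  have hmonog : Monotone g := by
    refine monotone_nat_of_le_succ ?_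
    intro k
    induction k with
    | zero => intro a; exact Fin.zero_le _
    | succ m ih =>
        have h1 : g (m+1) = TP P hinv (g m) := Function.iterate_succ_apply' _ _ _
        have h2 : g (m+2) = TP P hinv (g (m+1)) := Function.iterate_succ_apply' _ _ _
        calc g (m+1) = TP P hinv (g m) := h1
          _ ≤ TP P hinv (g (m+1)) := TP_mono P hinv hmono ih
          _ = g (m+2) := h2.symm
  have hstab : ∃ k, g (k+1) = g k := by
    by_contra hc
    push_neg at hc
    have hsm : StrictMono g := strictMono_nat_of_lt_succ fun k =>
      lt_of_le_of_ne (hmonog (Nat.le_succ k)) (Ne.symm (hc k))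
    obtain ⟨i, j, hij, hgij⟩ := Finite.exists_ne_map_eq_of_infinite g
    exact hij (hsm.injective hgij)
  obtain ⟨k, hk⟩ := hstab
  have hfix : TP P hinv (g k) = g k := by
    have h1 : g (k+1) = TP P hinv (g k) := Function.iterate_succ_apply' _ _ _
    rw [← h1]; exact hk
  exact ⟨k, hx (g k) (fixpoint_isModel P hinv hfix)⟩

end FLLP
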